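/- If G = (X,Y;E) is a bipartite graph, then χ'_int(G,X) ≤ Δ(X)·š(G), where Δ(X) is the maximum degree among vertices of X and š(G) is the palette index of G. -/
import Mathlib

private lemma rank_lt_card' {Q : Finset ℕ} {p : ℕ} (hp : p ∈ Q) :
    (Q.filter (fun x => x < p)).card < Q.card := by
  apply Finset.card_lt_card
  rw [Finset.ssubset_iff_of_subset (Finset.filter_subset _ _)]
  exact ⟨p, hp, by simp⟩

private lemma rank_inj' {Q : Finset ℕ} {p q : ℕ} (hp : p ∈ Q) (hq : q ∈ Q)
    (h : (Q.filter (fun x => x < p)).card = (Q.filter (fun x => x < q)).card) : p = q := by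
  have key : ∀ a b : ℕ, a ∈ Q → b ∈ Q → a < b →
      (Q.filter (fun x => x < a)).card < (Q.filter (fun x => x < b)).card := by
    intro a b ha hb hab
    apply Finset.card_lt_card
    rw [Finset.ssubset_iff_of_subset]
    · exact ⟨a, Finset.mem_filter.mpr ⟨ha, hab⟩, by simp⟩
    · intro x hx
      simp only [Finset.mem_filter] at hx ⊢
      exact ⟨hx.1, lt_trans hx.2 hab⟩
  rcases lt_trichotomy p q with hlt | he | hlt
  · exact absurd h (Nat.ne_of_lt (key _ _ hp hq hlt))
  · exact he
  · exact absurd h.symm (Nat.ne_of_lt (key _ _ hq hp hlt))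

private lemma rank_surj' {Q : Finset ℕ} {k : ℕ} (hk : k < Q.card) :
    ∃ p ∈ Q, (Q.filter (fun x => x < p)).card = k := by
  classical
  let g : {x // x ∈ Q} → Fin Q.card :=
    fun x => ⟨(Q.filter (fun t => t < x.val)).card, rank_lt_card' x.2⟩
  have hginj : Function.Injective g := by
    intro x y hxy
    exact Subtype.ext (rank_inj' x.2 y.2 (by simpa [g] using congrArg Fin.val hxy))
  have hcard : Fintype.card {x // x ∈ Q} = Fintype.card (Fin Q.card) := by simp
  obtain ⟨x, hxval⟩ := ((Fintype.bijective_iff_injective_and_card g).mpr ⟨hginj, hcard⟩).2 ⟨k, hk⟩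
  exact ⟨x.1, x.2, by simpa [g] using congrArg Fin.val hxval⟩

private lemma decomp' {Δ a b r r' : ℕ} (hr : r < Δ) (hr' : r' < Δ)
    (h : a * Δ + r = b * Δ + r') : a = b ∧ r = r' := by
  have key : ∀ a b r r' : ℕ, r < Δ → a < b → a * Δ + r < b * Δ + r' := by
    intro a b r r' hr hab
    calc a * Δ + r < a * Δ + Δ := by omega
    _ = (a + 1) * Δ := by ring
    _ ≤ b * Δ := Nat.mul_le_mul_right _ hab
    _ ≤ b * Δ + r' := Nat.le_add_right _ _
  have hab : a = b := by
    rcases lt_trichotomy a b with hlt | he | hlt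
    · exact absurd h (Nat.ne_of_lt (key _ _ _ _ hr hlt))
    · exact he
    · exact absurd h.symm (Nat.ne_of_lt (key _ _ _ _ hr' hlt))
  exact ⟨hab, by subst hab; omega⟩



/-- `X` is one part of a bipartition of `G`: every edge joins `X` and its complement. -/
def IsBipartition {V : Type*} (G : SimpleGraph V) (X : Set V) : Prop :=
  ∀ v w, G.Adj v w → (v ∈ X ↔ w ∉ X)

/-- A proper edge coloring: distinct edges sharing a vertex get distinct colors. -/
def IsProperEdgeColoring {V : Type*} (G : SimpleGraph V) (c : G.edgeSet → ℕ) : Prop :=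
  ∀ e f : G.edgeSet, e ≠ f → (∃ v, v ∈ (e : Sym2 V) ∧ v ∈ (f : Sym2 V)) → c e ≠ c f

/-- The palette of a vertex: the set of colors on its incident edges. -/
def palette {V : Type*} (G : SimpleGraph V) (c : G.edgeSet → ℕ) (v : V) : Set ℕ :=
  {n | ∃ e : G.edgeSet, v ∈ (e : Sym2 V) ∧ c e = n}

/-- The coloring is interval at `v`: the palette of `v` is a set of consecutive integers. -/
def IntervalAt {V : Type*} (G : SimpleGraph V) (c : G.edgeSet → ℕ) (v : V) : Prop :=
  ∀ a b m : ℕ, a ∈ palette G c v → b ∈ palette G c v → a ≤ m → m ≤ b →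
    m ∈ palette G c v

/-- If `G = (X, Y; E)` is a bipartite graph, then `χ'_int(G, X) ≤ Δ(X) * š(G)`:
whenever `ΔX` bounds the degrees of all vertices of `X` and `G` admits a proper edge
coloring `φ` whose number of distinct palettes `φ(v)`, over all vertices `v`, is at most
`s` (so in particular for `ΔX = Δ(X)` and `s = š(G)`, the palette index of `G`), the
graph `G` has an `X`-interval coloring using at most `ΔX * s` colors. -/
theorem X_interval_coloring_palette_index_bound {V : Type*} [Fintype V] [DecidableEq V]
    (G : SimpleGraph V) [DecidableRel G.Adj] (X : Set V) (ΔX s : ℕ)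
    (hbip : IsBipartition G X)
    (hΔX : ∀ x ∈ X, G.degree x ≤ ΔX)
    (hs : ∃ φ : G.edgeSet → ℕ, IsProperEdgeColoring G φ ∧
      ({P : Set ℕ | ∃ v : V, P = palette G φ v}).ncard ≤ s) :
    ∃ c : G.edgeSet → ℕ, IsProperEdgeColoring G c ∧ (∀ e, c e < ΔX * s) ∧
      ∀ x ∈ X, IntervalAt G c x := by
  classical
  obtain ⟨φ, hφ, hcard⟩ := hs
  -- the set of palettes
  set S : Set (Set ℕ) := {P : Set ℕ | ∃ v : V, P = palette G φ v} with hSdef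
  have hSfin : S.Finite := by
    have : S = Set.range (fun v => palette G φ v) := by
      ext P; constructor
      · rintro ⟨v, rfl⟩; exact ⟨v, rfl⟩
      · rintro ⟨v, rfl⟩; exact ⟨v, rfl⟩
    rw [this]; exact Set.finite_range _
  obtain ⟨n, f, hfr⟩ := hSfin.fin_embedding
  have hn : n ≤ s := by
    have h1 : S.ncard = n := by
      rw [← hfr, ← Set.image_univ, Set.ncard_image_of_injective _ f.injective,
        Set.ncard_univ]
      simp
    omega
  -- index of each vertex's palette
  have hex : ∀ v : V, ∃ i : Fin n, f i = palette G φ v := by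
    intro v
    have : palette G φ v ∈ S := ⟨v, rfl⟩
    rw [← hfr] at this
    exact this
  choose idx hidx using hex
  -- the X-endpoint of each edge
  have hXe : ∀ e : G.edgeSet, ∃ x, x ∈ (e : Sym2 V) ∧ x ∈ X ∧
      ∀ y ∈ (e : Sym2 V), y ∈ X → y = x := by
    rintro ⟨e, he⟩
    induction e using Sym2.ind with
    | _ a b =>
      rw [SimpleGraph.mem_edgeSet] at he
      have hab := hbip a b he
      by_cases ha : a ∈ X
      · refine ⟨a, by simp, ha, ?_⟩
        intro y hy hyX
        rcases Sym2.mem_iff.mp hy with rfl | rfl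
        · rfl
        · exact absurd hyX (hab.mp ha)
      · have hb : b ∈ X := by
          by_contra hb
          exact ha (hab.mpr hb)
        refine ⟨b, by simp, hb, ?_⟩
        intro y hy hyX
        rcases Sym2.mem_iff.mp hy with rfl | rfl
        · exact absurd hyX ha
        · rfl
  choose Xend hXmem hXin hXuniq using hXe
  -- palette as a Finset
  set Qv : V → Finset ℕ :=
    fun v => Finset.image φ (Finset.univ.filter (fun e : G.edgeSet => v ∈ (e : Sym2 V)))
    with hQvdef
  have hQmem : ∀ v p, p ∈ Qv v ↔ ∃ e : G.edgeSet, v ∈ (e : Sym2 V) ∧ φ e = p := by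
    intro v p
    simp [hQvdef]
  have hQpal : ∀ v, (Qv v : Set ℕ) = palette G φ v := by
    intro v
    ext p
    simp only [Finset.mem_coe, hQmem]
    rfl
  have hQcard : ∀ v, (Qv v).card ≤ G.degree v := by
    intro v
    have h1 : (Qv v).card ≤ (Finset.univ.filter (fun e : G.edgeSet => v ∈ (e : Sym2 V))).card :=
      Finset.card_image_le
    have h2 : ((Finset.univ.filter (fun e : G.edgeSet => v ∈ (e : Sym2 V))).image
        Subtype.val) = G.incidenceFinset v := by
      ext e
      rw [Finset.mem_image, SimpleGraph.mem_incidenceFinset]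
      constructor
      · rintro ⟨e', he', rfl⟩
        rw [Finset.mem_filter] at he'
        exact ⟨e'.2, he'.2⟩
      · intro h
        exact ⟨⟨e, h.1⟩, Finset.mem_filter.mpr ⟨Finset.mem_univ _, h.2⟩, rfl⟩
    have h3 : (Finset.univ.filter (fun e : G.edgeSet => v ∈ (e : Sym2 V))).card
        = G.degree v := by
      rw [← G.card_incidenceFinset_eq_degree v, ← h2,
        Finset.card_image_of_injective _ Subtype.val_injective]
    omega
  have hφmem : ∀ (e : G.edgeSet) (v : V), v ∈ (e : Sym2 V) → φ e ∈ Qv v := by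
    intro e v hv
    exact (hQmem v (φ e)).mpr ⟨e, hv, rfl⟩
  set c : G.edgeSet → ℕ :=
    fun e => (idx (Xend e)).val * ΔX + ((Qv (Xend e)).filter (fun t => t < φ e)).card
    with hcdef
  have hrlt : ∀ e : G.edgeSet, ((Qv (Xend e)).filter (fun t => t < φ e)).card < ΔX := by
    intro e
    have h1 := rank_lt_card' (hφmem e (Xend e) (hXmem e))
    have h2 := hQcard (Xend e)
    have h3 := hΔX (Xend e) (hXin e)
    omega
  refine ⟨c, ?_, ?_, ?_⟩
  · -- properness
    intro e f' hne hshare hcc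
    simp only [hcdef] at hcc
    have h1 := decomp' (hrlt e) (hrlt f') hcc
    have hpal : palette G φ (Xend e) = palette G φ (Xend f') := by
      rw [← hidx (Xend e), ← hidx (Xend f')]
      exact congrArg f (Fin.ext h1.1)
    have hQeq : Qv (Xend e) = Qv (Xend f') :=
      Finset.coe_injective (by rw [hQpal, hQpal, hpal])
    have hmf : φ f' ∈ Qv (Xend e) := by
      rw [hQeq]; exact hφmem f' (Xend f') (hXmem f')
    have heq := rank_inj' (hφmem e (Xend e) (hXmem e)) hmf (by rw [h1.2, hQeq])
    exact hφ e f' hne hshare heq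
  · -- color bound
    intro e
    have h1 : (idx (Xend e)).val + 1 ≤ n := (idx (Xend e)).isLt
    have h2 := hrlt e
    simp only [hcdef]
    calc (idx (Xend e)).val * ΔX + ((Qv (Xend e)).filter (fun t => t < φ e)).card
        < ((idx (Xend e)).val + 1) * ΔX := by rw [Nat.add_mul, Nat.one_mul]; omega
      _ ≤ s * ΔX := Nat.mul_le_mul_right _ (le_trans h1 hn)
      _ = ΔX * s := Nat.mul_comm _ _
  · -- interval property on X
    intro x hx a b m ha hb ham hmb
    obtain ⟨ea, hea, hca⟩ := ha
    obtain ⟨eb, heb, hcb⟩ := hb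
    have hXa : Xend ea = x := (hXuniq ea x hea hx).symm
    have hXb : Xend eb = x := (hXuniq eb x heb hx).symm
    have hca' : a = (idx x).val * ΔX + ((Qv x).filter (fun t => t < φ ea)).card := by
      rw [← hca]; simp only [hcdef, hXa]
    have hcb' : b = (idx x).val * ΔX + ((Qv x).filter (fun t => t < φ eb)).card := by
      rw [← hcb]; simp only [hcdef, hXb]
    have hrb : ((Qv x).filter (fun t => t < φ eb)).card < (Qv x).card :=
      rank_lt_card' (hφmem eb x (hXb ▸ hXmem eb))
    have hkey : m - (idx x).val * ΔX < (Qv x).card := by omega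
    obtain ⟨p, hpQ, hpr⟩ := rank_surj' hkey
    obtain ⟨e, hme, rfl⟩ := (hQmem x p).mp hpQ
    refine ⟨e, hme, ?_⟩
    have hXe' : Xend e = x := (hXuniq e x hme hx).symm
    simp only [hcdef, hXe']
    omega
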